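/- Every torsion-free module M over an integral domain admits a G*(ℵ₀)-family of relatively divisible submodules. Specifically, fixing a maximal independent set X of M, the collection of submodules M_Y (Y ⊆ X), where M_Y is the smallest relatively divisible submodule of M containing Y, is a G*(ℵ₀)-family. -/

import Mathlib

open Cardinal

universe u v

variable {R : Type u} [CommRing R] [IsDomain R]
variable {M : Type v} [AddCommGroup M] [Module R M]

/-- `A` is a relatively divisible (RD) submodule of `M`. -/
def IsRD (A : Submodule R M) : Prop :=
  ∀ (r : R) (m : M), r • m ∈ A → ∃ a ∈ A, r • a = r • m

/-- `A` is relatively divisible within the submodule `N` of `M`. -/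
def IsRDWithin (A N : Submodule R M) : Prop :=
  A ≤ N ∧ ∀ (r : R) (m : M), m ∈ N → r • m ∈ A → ∃ a ∈ A, r • a = r • m

/-- `A` is an RD*-submodule of `M`: RD, and every finite rank submodule of `M ⧸ A`
has a countable rank preimage. -/
def IsRDStar (A : Submodule R M) : Prop :=
  IsRD A ∧ ∀ Q : Submodule R (M ⧸ A), Module.rank R ↥Q < ℵ₀ →
    ∃ C : Submodule R M, Module.rank R ↥C ≤ ℵ₀ ∧ C.map A.mkQ = Q

/-- `A` is an RD*-submodule of the submodule `N` of `M`. -/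
def IsRDStarWithin (A N : Submodule R M) : Prop :=
  IsRDWithin A N ∧ ∀ Q : Submodule R (M ⧸ A), Q ≤ N.map A.mkQ →
    Module.rank R ↥Q < ℵ₀ →
    ∃ C : Submodule R M, C ≤ N ∧ Module.rank R ↥C ≤ ℵ₀ ∧ C.map A.mkQ = Q

/-- `A` is a direct summand of `M`. -/
def IsSummand (A : Submodule R M) : Prop :=
  ∃ P : Submodule R M, A ⊓ P = ⊥ ∧ A ⊔ P = ⊤

/-- `A` is a direct summand of the submodule `N` of `M`. -/
def IsSummandWithin (A N : Submodule R M) : Prop :=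
  A ≤ N ∧ ∃ P ≤ N, A ⊓ P = ⊥ ∧ A ⊔ P = N

/-- A G*(ℵ₀)-family of RD-submodules of `M`. -/
def IsGStarFamily (𝒢 : Set (Submodule R M)) : Prop :=
  (∀ A ∈ 𝒢, IsRD A) ∧ (⊥ : Submodule R M) ∈ 𝒢 ∧ (⊤ : Submodule R M) ∈ 𝒢 ∧
  (∀ c ⊆ 𝒢, IsChain (· ≤ ·) c → c.Nonempty → sSup c ∈ 𝒢) ∧
  ∀ C ∈ 𝒢, ∀ X : Set M, X.Countable →
    ∃ B ∈ 𝒢, C ≤ B ∧ X ⊆ ↑B ∧ Module.rank R ↥(B.map C.mkQ) ≤ ℵ₀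

/-- A G*(ℵ₀)-family of RD-submodules of the submodule `N` of `M`. -/
def IsGStarFamilyWithin (𝒢 : Set (Submodule R M)) (N : Submodule R M) : Prop :=
  (∀ A ∈ 𝒢, IsRDWithin A N) ∧ (⊥ : Submodule R M) ∈ 𝒢 ∧ N ∈ 𝒢 ∧
  (∀ c ⊆ 𝒢, IsChain (· ≤ ·) c → c.Nonempty → sSup c ∈ 𝒢) ∧
  ∀ C ∈ 𝒢, ∀ X : Set M, X ⊆ ↑N → X.Countable →
    ∃ B ∈ 𝒢, C ≤ B ∧ X ⊆ ↑B ∧ Module.rank R ↥(B.map C.mkQ) ≤ ℵ₀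

/-- `A` is ultra-balanced in `M`: an RD-submodule that is a direct summand of every
RD-submodule `C` of `M` containing `A` with `C/A` of finite rank. -/
def IsUltraBalanced (A : Submodule R M) : Prop :=
  IsRD A ∧ ∀ C : Submodule R M, IsRD C → A ≤ C →
    Module.rank R ↥(C.map A.mkQ) < ℵ₀ →
    ∃ D ≤ C, A ⊓ D = ⊥ ∧ A ⊔ D = C

/-- `N` is a direct sum of submodules of countable rank. -/
def DSumCountableRank (R : Type u) [CommRing R] (N : Type v) [AddCommGroup N]
    [Module R N] : Prop :=
  ∃ (ι : Type v) (f : ι → Submodule R N), iSupIndep f ∧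
    iSup f = ⊤ ∧ ∀ i, Module.rank R ↥(f i) ≤ ℵ₀

/-- `N` is finitely decomposable: a direct sum of finite rank submodules. -/
def FinDecomp (R : Type u) [CommRing R] (N : Type v) [AddCommGroup N]
    [Module R N] : Prop :=
  ∃ (ι : Type v) (f : ι → Submodule R N), iSupIndep f ∧
    iSup f = ⊤ ∧ ∀ i, Module.rank R ↥(f i) < ℵ₀

/-- The smallest RD-submodule of `M` containing `Y`. -/
def rdClosure (Y : Set M) : Submodule R M :=
  sInf {N : Submodule R M | IsRD N ∧ Y ⊆ ↑N}

section Aux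

open Submodule

variable {R : Type u} [CommRing R] [IsDomain R]
variable {M : Type v} [AddCommGroup M] [Module R M]

lemma isRD_of_tf (A : Submodule R M) (h : ∀ (r : R) (m : M), r ≠ 0 → r • m ∈ A → m ∈ A) :
    IsRD A := fun r m hm => by
  rcases eq_or_ne r 0 with rfl | hr
  · exact ⟨0, A.zero_mem, by simp⟩
  · exact ⟨m, h r m hr hm, rfl⟩

lemma tf_of_isRD [NoZeroSMulDivisors R M] {A : Submodule R M} (hA : IsRD A)
    {r : R} {m : M} (hr : r ≠ 0) (hm : r • m ∈ A) : m ∈ A := by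
  obtain ⟨a, ha, hra⟩ := hA r m hm
  have h0 : r • (a - m) = 0 := by rw [smul_sub, hra, sub_self]
  rcases smul_eq_zero.mp h0 with h | h
  · exact absurd h hr
  · rw [sub_eq_zero] at h
    exact h ▸ ha

/-- The torsion closure of the span of `Y`. -/
def tcl (Y : Set M) : Submodule R M where
  carrier := {m | ∃ r : R, r ≠ 0 ∧ r • m ∈ span R Y}
  zero_mem' := ⟨1, one_ne_zero, by simp⟩
  add_mem' := by
    rintro a b ⟨r, hr, hra⟩ ⟨s, hs, hsb⟩
    refine ⟨r * s, mul_ne_zero hr hs, ?_⟩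
    rw [smul_add]
    exact add_mem (by rw [mul_comm, mul_smul]; exact smul_mem _ s hra)
      (by rw [mul_smul]; exact smul_mem _ r hsb)
  smul_mem' := by
    rintro c a ⟨r, hr, hra⟩
    exact ⟨r, hr, by rw [smul_comm]; exact smul_mem _ c hra⟩

lemma mem_tcl {Y : Set M} {m : M} : m ∈ tcl (R := R) Y ↔ ∃ r : R, r ≠ 0 ∧ r • m ∈ span R Y :=
  Iff.rfl

lemma tcl_isRD (Y : Set M) : IsRD (tcl (R := R) Y) := by
  apply isRD_of_tf
  rintro r m hr ⟨s, hs, hsm⟩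
  exact ⟨s * r, mul_ne_zero hs hr, by rwa [mul_smul]⟩

lemma subset_tcl (Y : Set M) : Y ⊆ (tcl (R := R) Y : Set M) :=
  fun y hy => ⟨1, one_ne_zero, by simpa using subset_span hy⟩

lemma tcl_mono {Y Z : Set M} (h : Y ⊆ Z) : tcl (R := R) Y ≤ tcl Z := by
  rintro m ⟨r, hr, hrm⟩
  exact ⟨r, hr, span_mono h hrm⟩

lemma tcl_le [NoZeroSMulDivisors R M] {Y : Set M} {N : Submodule R M} (hN : IsRD N)
    (hY : Y ⊆ N) : tcl Y ≤ N := by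
  rintro m ⟨r, hr, hrm⟩
  exact tf_of_isRD hN hr (span_le.mpr hY hrm)

lemma rdClosure_eq_tcl [NoZeroSMulDivisors R M] (Y : Set M) :
    rdClosure (R := R) Y = tcl Y :=
  le_antisymm (sInf_le ⟨tcl_isRD Y, subset_tcl Y⟩) (le_sInf fun _ hN => tcl_le hN.1 hN.2)

lemma tcl_empty [NoZeroSMulDivisors R M] : tcl (R := R) (∅ : Set M) = ⊥ := by
  apply le_antisymm _ bot_le
  rintro m ⟨r, hr, hrm⟩
  rw [span_empty, mem_bot] at hrm
  rcases smul_eq_zero.mp hrm with h | h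
  · exact absurd h hr
  · simpa [h]

/-- Maximality gives: every element has a nonzero multiple in the span of `X`. -/
lemma exists_smul_mem_span_of_max (X : Set M)
    (hX : LinearIndependent R (Subtype.val : X → M))
    (hmax : ∀ Y : Set M, X ⊆ Y → LinearIndependent R (Subtype.val : Y → M) → Y = X)
    (m : M) : ∃ r : R, r ≠ 0 ∧ r • m ∈ span R X := by
  classical
  by_cases hmX : m ∈ X
  · exact ⟨1, one_ne_zero, by simpa using subset_span hmX⟩
  have hX' : LinearIndependent R ((id : M → M) ∘ (Subtype.val : X → M)) := hX
  set J := insert m X with hJ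
  have hdep : ¬ LinearIndependent R ((id : M → M) ∘ (Subtype.val : J → M)) := by
    intro h
    exact hmX ((hmax J (Set.subset_insert _ _) h) ▸ Set.mem_insert m X)
  obtain ⟨f, supp_f, sum_f, f_ne⟩ := (linearDepOn_iff (v := id) (s := J)).mp hdep
  have hfm : f m ≠ 0 := by
    intro h0
    apply f_ne
    have hsupp : f ∈ Finsupp.supported R R X := by
      intro x hx
      rcases Set.mem_insert_iff.mp (supp_f hx) with rfl | hxX
      · exact absurd h0 (Finsupp.mem_support_iff.mp hx)
      · exact hxX
    by_contra hfne
    exact (linearDepOn_iff (v := id) (s := X)).mpr ⟨f, hsupp, sum_f, hfne⟩ hX'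
  have hfm' : m ∈ f.support := Finsupp.mem_support_iff.mpr hfm
  rw [← Finset.insert_erase hfm', Finset.sum_insert (Finset.notMem_erase _ _),
    add_eq_zero_iff_eq_neg] at sum_f
  refine ⟨f m, hfm, ?_⟩
  show f m • (id m) ∈ span R X
  rw [sum_f]
  refine neg_mem (sum_mem fun c hc => smul_mem _ _ (subset_span ?_))
  exact (Set.mem_insert_iff.mp (supp_f (Finset.erase_subset _ _ hc))).resolve_left
    (Finset.ne_of_mem_erase hc)

/-- `Y` can be recovered from `tcl Y` as `X ∩ tcl Y`. -/
lemma inter_tcl_eq {X : Set M} (hX : LinearIndependent R (Subtype.val : X → M))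
    {Y : Set M} (hYX : Y ⊆ X) : X ∩ (tcl (R := R) Y : Set M) = Y := by
  apply Set.Subset.antisymm
  · rintro x ⟨hxX, r, hr, hrx⟩
    by_contra hxY
    refine hr (linearIndependent_iff_eq_zero_of_smul_mem_span.mp hX ⟨x, hxX⟩ r ?_)
    refine span_mono ?_ hrx
    rintro y hy
    refine ⟨⟨y, hYX hy⟩, ⟨Set.mem_univ _, ?_⟩, rfl⟩
    intro hmem
    apply hxY
    have : y = x := congrArg Subtype.val (Set.mem_singleton_iff.mp hmem)
    exact this ▸ hy
  · exact fun y hy => ⟨hYX hy, subset_tcl Y hy⟩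

/-- Rank bound: a submodule all of whose elements have a nonzero multiple in the span
of a countable set has rank at most `ℵ₀`. -/
lemma rank_le_aleph0_of_tcl {N : Type v} [AddCommGroup N] [Module R N]
    (Q : Submodule R N) (W : Set N) (hW : W.Countable)
    (hQ : ∀ q ∈ Q, ∃ r : R, r ≠ 0 ∧ r • q ∈ span R W) :
    Module.rank R Q ≤ ℵ₀ := by
  rw [Module.rank_def]
  refine ciSup_le' ?_
  rintro ⟨s, hs⟩
  choose r hr hmem using fun x : s => hQ ((x : ↥Q) : N) (Submodule.coe_mem _)
  set v : s → ↥(span R W) := fun x => ⟨r x • ((x : ↥Q) : N), hmem x⟩ with hv_def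
  have hs' : LinearIndependent R (fun x : s => ((x : ↥Q) : N)) :=
    hs.map' Q.subtype (Submodule.ker_subtype Q)
  have hv : LinearIndependent R v := by
    rw [linearIndependent_iff']
    intro t g hsum x hx
    have hsum' : ∑ i ∈ t, (g i * r i) • ((i : ↥Q) : N) = 0 := by
      have := congrArg (Subtype.val : ↥(span R W) → N) hsum
      rw [show ((0 : ↥(span R W)) : N) = 0 from rfl] at this
      rw [← this]
      push_cast
      refine Finset.sum_congr rfl fun i _ => ?_
      rw [mul_smul]
    have := linearIndependent_iff'.mp hs' t (fun i => g i * r i) hsum' x hx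
    rcases mul_eq_zero.mp this with h | h
    · exact h
    · exact absurd h (hr x)
  calc (#s) ≤ Module.rank R ↥(span R W) := hv.cardinal_le_rank
    _ ≤ #W := rank_span_le W
    _ ≤ ℵ₀ := Cardinal.mk_le_aleph0_iff.mpr hW.to_subtype

end Aux

/-- The RD-closures of the subsets of a maximal independent set `X` form a
G*(ℵ₀)-family of RD-submodules of `M`. -/
theorem gStarFamily_rdClosures [NoZeroSMulDivisors R M] (X : Set M)
    (hX : LinearIndependent R (Subtype.val : X → M))
    (hmax : ∀ Y : Set M, X ⊆ Y → LinearIndependent R (Subtype.val : Y → M) → Y = X) :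
    IsGStarFamily {N : Submodule R M | ∃ Y ⊆ X, N = rdClosure Y} := by
  classical
  have hspan : ∀ m : M, ∃ r : R, r ≠ 0 ∧ r • m ∈ Submodule.span R X :=
    exists_smul_mem_span_of_max X hX hmax
  refine ⟨?_, ?_, ?_, ?_, ?_⟩
  · rintro A ⟨Y, hY, rfl⟩
    rw [rdClosure_eq_tcl]
    exact tcl_isRD Y
  · exact ⟨∅, Set.empty_subset X, by rw [rdClosure_eq_tcl, tcl_empty]⟩
  · refine ⟨X, subset_rfl, ?_⟩
    rw [rdClosure_eq_tcl]
    exact (top_le_iff.mp fun m _ => hspan m).symm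
  · intro c hc hchain hne
    have hdir := hchain.directedOn
    have hRD : IsRD (sSup c) := by
      apply isRD_of_tf
      intro r m hr hm
      obtain ⟨N, hN, hmN⟩ := (Submodule.mem_sSup_of_directed hne hdir).mp hm
      obtain ⟨Y, hYX, rfl⟩ := hc hN
      rw [rdClosure_eq_tcl] at hmN hN
      exact le_sSup hN (tf_of_isRD (tcl_isRD Y) hr hmN)
    refine ⟨X ∩ ↑(sSup c), Set.inter_subset_left, ?_⟩
    rw [rdClosure_eq_tcl]
    apply le_antisymm
    · refine sSup_le fun N hN => ?_
      obtain ⟨Y, hYX, rfl⟩ := hc hN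
      rw [rdClosure_eq_tcl] at hN ⊢
      apply tcl_mono
      intro y hy
      exact ⟨hYX hy, le_sSup hN (subset_tcl Y hy)⟩
    · exact tcl_le hRD Set.inter_subset_right
  · rintro C ⟨Y, hYX, rfl⟩ S hS
    choose r hr hmem using fun s : S => hspan (s : M)
    choose F hFX hFspan using fun s : S => Submodule.mem_span_finite_of_mem_span (hmem s)
    set Z : Set M := ⋃ s : S, (F s : Set M) with hZ
    have hZX : Z ⊆ X := Set.iUnion_subset fun s => hFX s
    have hZc : Z.Countable := by
      have : Countable ↥S := hS.to_subtype
      exact Set.countable_iUnion fun s => (F s).countable_toSet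
    have hYC : Y ⊆ ↑(rdClosure (R := R) Y) := by
      rw [rdClosure_eq_tcl]
      exact subset_tcl Y
    refine ⟨rdClosure (Y ∪ Z), ⟨Y ∪ Z, Set.union_subset hYX hZX, rfl⟩, ?_, ?_, ?_⟩
    · rw [rdClosure_eq_tcl, rdClosure_eq_tcl]
      exact tcl_mono Set.subset_union_left
    · intro s hs
      rw [rdClosure_eq_tcl]
      refine ⟨r ⟨s, hs⟩, hr _, ?_⟩
      refine Submodule.span_mono ?_ (hFspan ⟨s, hs⟩)
      exact fun x hx => Or.inr (Set.mem_iUnion.mpr ⟨⟨s, hs⟩, hx⟩)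
    · apply rank_le_aleph0_of_tcl _ ((rdClosure (R := R) Y).mkQ '' Z) (hZc.image _)
      rintro q hq
      obtain ⟨b, hb, rfl⟩ := Submodule.mem_map.mp hq
      rw [rdClosure_eq_tcl] at hb
      obtain ⟨rb, hrb, hrbm⟩ := hb
      refine ⟨rb, hrb, ?_⟩
      have h1 : rb • (rdClosure (R := R) Y).mkQ b = (rdClosure (R := R) Y).mkQ (rb • b) :=
        (map_smul _ _ _).symm
      rw [h1]
      have h2 : (rdClosure (R := R) Y).mkQ (rb • b) ∈
          (Submodule.span R (Y ∪ Z)).map (rdClosure (R := R) Y).mkQ :=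
        Submodule.mem_map_of_mem hrbm
      rw [Submodule.map_span] at h2
      refine Submodule.span_le.mpr ?_ h2
      rintro _ ⟨x, hx, rfl⟩
      rcases hx with hx | hx
      · have hx0 : (rdClosure (R := R) Y).mkQ x = 0 := by
          rw [Submodule.mkQ_apply, Submodule.Quotient.mk_eq_zero]
          exact hYC hx
        rw [hx0]
        exact Submodule.zero_mem _
      · exact Submodule.subset_span ⟨x, hx, rfl⟩
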